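/- With e_i x^{(β)} = [β_i+1] x^{(β+ε_i−ε_{i+1})} (1 ≤ i ≤ n−2) and e_n x^{(β)} = [β_n+1](Σ_{k=1}^{n} θ(ε_k,β)[β_k]) x^{(β+ε_n)}, one has e_i e_n = e_n e_i for all 1 ≤ i ≤ n−2. -/

import Mathlib

open Finset

/-- The quantum integer `[m] := (q^m - q^{-m})/(q - q^{-1})` for `m : ℤ`. -/
def qint {K : Type*} [Field K] (q : K) (m : ℤ) : K :=
  (q ^ m - q ^ (-m)) / (q - q⁻¹)

/-- `θ(ε_k, β) = q^{Σ_{s>k} β_s - Σ_{s<k} β_s}`. -/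
def thq {K : Type*} [Field K] (q : K) (n : ℕ) (β : ℕ → ℤ) (k : ℕ) : K :=
  q ^ ((∑ s ∈ Finset.Icc (k + 1) n, β s) - ∑ s ∈ Finset.Ico 1 k, β s)

/-- The `i`-th standard basis vector `ε_i`. -/
def eps (i : ℕ) : ℕ → ℤ := fun k => if k = i then 1 else 0

lemma qsub_ne {K : Type*} [Field K] (q : K) (hq0 : q ≠ 0) (hq1 : q ≠ 1) (hqm : q ≠ -1) :
    q - q⁻¹ ≠ 0 := by
  intro h
  have h2 : (q - 1) * (q + 1) = 0 := by
    have := sub_eq_zero.mp h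
    field_simp at this
    linear_combination this
  rcases mul_eq_zero.mp h2 with h' | h'
  · exact hq1 (sub_eq_zero.mp h')
  · exact hqm (eq_neg_of_add_eq_zero_left h')

lemma key0 {K : Type*} [Field K] (q : K) (hq0 : q ≠ 0) (E a b : ℤ) :
    q^(E-1) * (q^(a+1) - q^(-(a+1))) + q^(E-a-b-1) * (q^(b-1) - q^(-(b-1)))
    = q^E * (q^a - q^(-a)) + q^(E-a-b) * (q^b - q^(-b)) := by
  simp only [mul_sub, ← zpow_add₀ hq0]
  rw [show E - 1 + (a+1) = E + a by ring, show E - 1 + -(a+1) = E - a - 2 by ring,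
      show E - a - b - 1 + (b-1) = E - a - 2 by ring,
      show E - a - b - 1 + -(b-1) = E - a - 2*b by ring,
      show E + -a = E - a by ring, show E - a - b + b = E - a by ring,
      show E - a - b + -b = E - a - 2*b by ring]
  ring

lemma key {K : Type*} [Field K] (q : K) (hq0 : q ≠ 0) (hd : q - q⁻¹ ≠ 0) (E a b : ℤ) :
    q^(E-1) * qint q (a+1) + q^(E-a-b-1) * qint q (b-1)
    = q^E * qint q a + q^(E-a-b) * qint q b := by
  unfold qint
  simp only [← mul_div_assoc]
  rw [← add_div, ← add_div, div_eq_div_iff hd hd]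
  linear_combination (q - q⁻¹) * key0 q hq0 E a b

lemma sum_shift {K : Type*} [Field K] (q : K) (hq0 : q ≠ 0) (hd : q - q⁻¹ ≠ 0)
    (n i : ℕ) (hi1 : 1 ≤ i) (hi2 : i + 2 ≤ n) (β : ℕ → ℤ) :
    ∑ k ∈ Finset.Icc 1 n, thq q n (β + eps i - eps (i + 1)) k *
        qint q ((β + eps i - eps (i + 1)) k)
    = ∑ k ∈ Finset.Icc 1 n, thq q n β k * qint q (β k) := by
  have hsum : ∀ S : Finset ℕ, ∑ s ∈ S, (β + eps i - eps (i + 1)) s =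
      (∑ s ∈ S, β s) + (if i ∈ S then (1:ℤ) else 0) - (if i + 1 ∈ S then (1:ℤ) else 0) := by
    intro S
    simp only [Pi.sub_apply, Pi.add_apply, Finset.sum_sub_distrib, Finset.sum_add_distrib, eps]
    rw [Finset.sum_ite_eq' S i (fun _ => (1:ℤ)), Finset.sum_ite_eq' S (i+1) (fun _ => (1:ℤ))]
  have hAi : ∑ s ∈ Finset.Icc (i+1) n, β s
      = β (i+1) + ∑ s ∈ Finset.Icc (i+1+1) n, β s := by
    rw [← Finset.sum_insert (show i+1 ∉ Finset.Icc (i+1+1) n by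
      simp only [Finset.mem_Icc]; omega)]
    congr 1
    ext x
    simp only [Finset.mem_insert, Finset.mem_Icc]
    omega
  have hBi : ∑ s ∈ Finset.Ico 1 (i+1), β s = (∑ s ∈ Finset.Ico 1 i, β s) + β i := by
    have hset : Finset.Ico 1 (i+1) = insert i (Finset.Ico 1 i) := by
      ext x
      simp only [Finset.mem_insert, Finset.mem_Ico]
      omega
    rw [hset, Finset.sum_insert (by simp only [Finset.mem_Ico]; omega)]
    ring
  rw [← sub_eq_zero, ← Finset.sum_sub_distrib]
  rw [Finset.sum_eq_add_of_mem i (i+1)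
      (by simp only [Finset.mem_Icc]; omega) (by simp only [Finset.mem_Icc]; omega) (by omega)]
  · -- the two remaining terms cancel
    have hth1 : thq q n (β + eps i - eps (i + 1)) i
        = q ^ (((∑ s ∈ Finset.Icc (i+1) n, β s) - ∑ s ∈ Finset.Ico 1 i, β s) - 1) := by
      unfold thq
      rw [hsum, hsum]
      congr 1
      simp only [Finset.mem_Icc, Finset.mem_Ico]
      split_ifs <;> omega
    have hth3 : thq q n (β + eps i - eps (i + 1)) (i+1)
        = q ^ (((∑ s ∈ Finset.Icc (i+1) n, β s) - ∑ s ∈ Finset.Ico 1 i, β s)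
            - β i - β (i+1) - 1) := by
      unfold thq
      rw [hsum, hsum]
      congr 1
      have h1 : ¬ (i ∈ Finset.Icc (i+1+1) n) := by simp only [Finset.mem_Icc]; omega
      have h2 : ¬ (i+1 ∈ Finset.Icc (i+1+1) n) := by simp only [Finset.mem_Icc]; omega
      have h3 : i ∈ Finset.Ico 1 (i+1) := by simp only [Finset.mem_Ico]; omega
      have h4 : ¬ (i+1 ∈ Finset.Ico 1 (i+1)) := by simp only [Finset.mem_Ico]; omega
      rw [if_neg h1, if_neg h2, if_pos h3, if_neg h4]
      linarith [hAi, hBi]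
    have hth4 : thq q n β (i+1)
        = q ^ (((∑ s ∈ Finset.Icc (i+1) n, β s) - ∑ s ∈ Finset.Ico 1 i, β s)
            - β i - β (i+1)) := by
      unfold thq
      congr 1
      linarith [hAi, hBi]
    have hth2 : thq q n β i
        = q ^ ((∑ s ∈ Finset.Icc (i+1) n, β s) - ∑ s ∈ Finset.Ico 1 i, β s) := rfl
    have hb1 : (β + eps i - eps (i + 1)) i = β i + 1 := by
      simp [eps]
    have hb2 : (β + eps i - eps (i + 1)) (i+1) = β (i+1) - 1 := by
      simp [eps]
    rw [hth1, hth2, hth3, hth4, hb1, hb2]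
    linear_combination key q hq0 hd
      ((∑ s ∈ Finset.Icc (i+1) n, β s) - ∑ s ∈ Finset.Ico 1 i, β s) (β i) (β (i+1))
  · -- other terms vanish
    intro k hk ⟨hki, hki1⟩
    rw [sub_eq_zero]
    have hbk : (β + eps i - eps (i + 1)) k = β k := by
      simp [eps, hki, hki1]
    rw [hbk]
    congr 1
    unfold thq
    rw [hsum, hsum]
    congr 1
    simp only [Finset.mem_Icc] at hk
    simp only [Finset.mem_Icc, Finset.mem_Ico]
    split_ifs <;> omega

theorem ei_en_commute {K V : Type*} [Field K] [AddCommGroup V] [Module K V]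
    (q : K) (hq0 : q ≠ 0) (hq1 : q ≠ 1) (hqm : q ≠ -1) (n : ℕ) (hn : 3 ≤ n)
    (X : (ℕ → ℤ) → V)
    (hX0 : ∀ β : ℕ → ℤ, (∃ k ∈ Finset.Icc 1 n, β k < 0) → X β = 0)
    (en : Module.End K V) (e : ℕ → Module.End K V)
    (he : ∀ i, 1 ≤ i → i + 2 ≤ n → ∀ β : ℕ → ℤ, (∀ k ∈ Finset.Icc 1 n, 0 ≤ β k) →
      e i (X β) = qint q (β i + 1) • X (β + eps i - eps (i + 1)))
    (hen : ∀ β : ℕ → ℤ, (∀ k ∈ Finset.Icc 1 n, 0 ≤ β k) →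
      en (X β) = (qint q (β n + 1) * ∑ k ∈ Finset.Icc 1 n, thq q n β k * qint q (β k)) •
        X (β + eps n)) :
    ∀ i, 1 ≤ i → i + 2 ≤ n → ∀ β : ℕ → ℤ, (∀ k ∈ Finset.Icc 1 n, 0 ≤ β k) →
      (e i * en) (X β) = (en * e i) (X β) := by
  intro i hi1 hi2 β hβ
  have hd := qsub_ne q hq0 hq1 hqm
  have hin : i ≠ n := by omega
  have hi1n : i + 1 ≠ n := by omega
  have hβn : ∀ k ∈ Finset.Icc 1 n, 0 ≤ (β + eps n) k := by
    intro k hk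
    simp only [Pi.add_apply, eps]
    have := hβ k hk
    split_ifs <;> omega
  simp only [Module.End.mul_apply]
  rw [hen β hβ, map_smul, he i hi1 hi2 (β + eps n) hβn, he i hi1 hi2 β hβ, map_smul]
  by_cases hpos : 1 ≤ β (i+1)
  · -- nondegenerate case
    have hβ' : ∀ k ∈ Finset.Icc 1 n, 0 ≤ (β + eps i - eps (i+1)) k := by
      intro k hk
      have hk0 := hβ k hk
      by_cases hk1 : k = i + 1
      · subst hk1
        simp only [Pi.sub_apply, Pi.add_apply, eps, if_neg (by omega : ¬ i + 1 = i), if_pos rfl]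
        omega
      · by_cases hk2 : k = i
        · subst hk2
          simp only [Pi.sub_apply, Pi.add_apply, eps, if_pos rfl, if_neg hk1]
          omega
        · simp only [Pi.sub_apply, Pi.add_apply, eps, if_neg hk1, if_neg hk2]
          omega
    rw [hen (β + eps i - eps (i+1)) hβ', smul_smul, smul_smul]
    have harg : (β + eps n) + eps i - eps (i + 1) = (β + eps i - eps (i+1)) + eps n := by
      abel
    rw [harg]
    congr 1
    have h1 : (β + eps n) i = β i := by simp [eps, hin]
    have h2 : (β + eps i - eps (i+1)) n = β n := by
      simp [eps, hin.symm, hi1n.symm]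
    rw [h1, h2, sum_shift q hq0 hd n i hi1 hi2 β]
    ring
  · -- degenerate case: β (i+1) = 0, both sides vanish
    have h0 : β (i+1) = 0 := by
      have := hβ (i+1) (by simp [Finset.mem_Icc]; omega)
      omega
    have hz1 : X ((β + eps n) + eps i - eps (i + 1)) = 0 := by
      apply hX0
      exact ⟨i+1, by simp [Finset.mem_Icc]; omega, by simp [eps, hi1n, h0]⟩
    have hz2 : X (β + eps i - eps (i + 1)) = 0 := by
      apply hX0
      exact ⟨i+1, by simp [Finset.mem_Icc]; omega, by simp [eps, h0]⟩
    rw [hz1, hz2]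
    simp
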